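/- Fix a natural number k, a type α, and pairwise disjoint, finite, nonempty sub-alphabets σ₁, …, σ_k ⊆ α. Let C₁ and C₂ be arc sets on {1, …, k} that are well-nested matchings. If there exist arcs e₁ ∈ C₁ and e₂ ∈ C₂ with e₁ ≠ e₂ that share an endpoint (i.e., the two-element endpoint sets of e₁ and e₂ intersect), then the intersection L(C₁) ∩ L(C₂) of the corresponding block-counting languages is not context-free. -/

import Mathlib

namespace CFPump
open ContextFreeGrammar

variable {T : Type}

/-- Length-indexed derivations. -/
inductive DerIn (g : ContextFreeGrammar.{0} T) :
    ℕ → List (Symbol T g.NT) → List (Symbol T g.NT) → Prop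
  | refl (u) : DerIn g 0 u u
  | head {u v w : List (Symbol T g.NT)} {n : ℕ} :
      g.Produces u v → DerIn g n v w → DerIn g (n + 1) u w

variable {g : ContextFreeGrammar.{0} T}

lemma DerIn.tail {n : ℕ} {u v w : List (Symbol T g.NT)}
    (h : DerIn g n u v) (hp : g.Produces v w) : DerIn g (n + 1) u w := by
  induction h with
  | refl => exact .head hp (.refl _)
  | head h1 _ ih => exact .head h1 (ih hp)

lemma derIn_of_derives {u v : List (Symbol T g.NT)} (h : g.Derives u v) :
    ∃ n, DerIn g n u v := by
  induction h with
  | refl => exact ⟨0, .refl u⟩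
  | tail _ hp ih => obtain ⟨n, hn⟩ := ih; exact ⟨n + 1, hn.tail hp⟩

lemma rewrites_nil {r : ContextFreeRule T g.NT} {v : List (Symbol T g.NT)}
    (h : r.Rewrites [] v) : False := by cases h

/-- A rewrite of a concatenation happens in one of the two parts. -/
lemma rewrites_append {r : ContextFreeRule T g.NT} {u v w : List (Symbol T g.NT)}
    (h : r.Rewrites (u ++ v) w) :
    (∃ u', r.Rewrites u u' ∧ w = u' ++ v) ∨ (∃ v', r.Rewrites v v' ∧ w = u ++ v') := by
  obtain ⟨p, q, h1, h2⟩ := h.exists_parts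
  rw [List.append_assoc] at h1
  rcases List.append_eq_append_iff.mp h1 with ⟨a, ha, hb⟩ | ⟨c, hc, hd⟩
  · -- p = u ++ a, v = a ++ [NT] ++ q : rewrite inside v
    right
    refine ⟨a ++ r.output ++ q, ?_, by simp [h2, ha]⟩
    rw [hb, ← List.append_assoc]; exact ContextFreeRule.rewrites_of_exists_parts r a q
  · -- u = p ++ c, [NT] ++ q = c ++ v
    cases c with
    | nil =>
      right
      simp at hc hd
      refine ⟨r.output ++ q, ?_, by simp [h2, hc]⟩
      rw [← hd]; simpa using ContextFreeRule.rewrites_of_exists_parts r [] q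
    | cons s c' =>
      left
      simp at hd
      obtain ⟨hs, hq⟩ := hd
      refine ⟨p ++ r.output ++ c', ?_, ?_⟩
      · rw [hc, ← hs]
        simpa using ContextFreeRule.rewrites_of_exists_parts r p c'
      · simp [h2, hq]

lemma produces_append {u v w : List (Symbol T g.NT)} (h : g.Produces (u ++ v) w) :
    (∃ u', g.Produces u u' ∧ w = u' ++ v) ∨ (∃ v', g.Produces v v' ∧ w = u ++ v') := by
  obtain ⟨r, hr, hrw⟩ := h
  rcases rewrites_append hrw with ⟨u', h1, h2⟩ | ⟨v', h1, h2⟩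
  · exact .inl ⟨u', ⟨r, hr, h1⟩, h2⟩
  · exact .inr ⟨v', ⟨r, hr, h1⟩, h2⟩

lemma DerIn.append_split {n : ℕ} {s w : List (Symbol T g.NT)} (h : DerIn g n s w) :
    ∀ u v, s = u ++ v → ∃ n₁ n₂ u' v', n₁ + n₂ = n ∧ w = u' ++ v' ∧
      DerIn g n₁ u u' ∧ DerIn g n₂ v v' := by
  induction h with
  | refl s => exact fun u v huv => ⟨0, 0, u, v, rfl, huv, .refl u, .refl v⟩
  | @head s t w n hp _ ih =>
    rintro u v rfl
    rcases produces_append hp with ⟨u', h1, rfl⟩ | ⟨v', h1, rfl⟩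
    · obtain ⟨n₁, n₂, a, b, hn, hw, d1, d2⟩ := ih u' v rfl
      exact ⟨n₁ + 1, n₂, a, b, by omega, hw, .head h1 d1, d2⟩
    · obtain ⟨n₁, n₂, a, b, hn, hw, d1, d2⟩ := ih u v' rfl
      exact ⟨n₁, n₂ + 1, a, b, by omega, hw, d1, .head h1 d2⟩

/-- Terminal strings don't rewrite. -/
lemma produces_terminal {w : List T} {v : List (Symbol T g.NT)}
    (h : g.Produces (w.map Symbol.terminal) v) : False := by
  obtain ⟨r, _, hrw⟩ := h
  obtain ⟨p, q, h1, -⟩ := hrw.exists_parts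
  have : Symbol.nonterminal r.input ∈ w.map (Symbol.terminal (N := g.NT)) := by
    rw [h1]; simp
  simp at this

lemma DerIn.terminal_eq {n : ℕ} {w : List T} {v : List (Symbol T g.NT)}
    (h : DerIn g n (w.map Symbol.terminal) v) : v = w.map Symbol.terminal := by
  cases h with
  | refl => rfl
  | head hp _ => exact absurd hp produces_terminal

/-- First step from a single nonterminal. -/
lemma rewrites_single_nt {r : ContextFreeRule T g.NT} {A : g.NT} {v : List (Symbol T g.NT)}
    (h : r.Rewrites [Symbol.nonterminal A] v) : r.input = A ∧ v = r.output := by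
  cases h with
  | head s =>
    simp_all
  | cons x hrs => exact absurd hrs rewrites_nil

mutual
/-- Parse trees. -/
inductive PTree (g : ContextFreeGrammar.{0} T) : g.NT → Type
  | node (r : ContextFreeRule T g.NT) (hr : r ∈ g.rules) (children : SForest g r.output) :
      PTree g r.input

/-- Forests of parse trees indexed by a sentential form. -/
inductive SForest (g : ContextFreeGrammar.{0} T) : List (Symbol T g.NT) → Type
  | nil : SForest g []
  | consT (t : T) {l : List (Symbol T g.NT)} (f : SForest g l) :
      SForest g (Symbol.terminal t :: l)
  | consN {B : g.NT} {l : List (Symbol T g.NT)} (tr : PTree g B) (f : SForest g l) :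
      SForest g (Symbol.nonterminal B :: l)
end

mutual
/-- Yield of a parse tree. -/
def PTree.yield {A : g.NT} : PTree g A → List T
  | .node _ _ f => f.yieldF

/-- Yield of a forest. -/
def SForest.yieldF {l : List (Symbol T g.NT)} : SForest g l → List T
  | .nil => []
  | .consT t f => t :: f.yieldF
  | .consN tr f => tr.yield ++ f.yieldF
end

mutual
theorem PTree.yield_derives {A : g.NT} : (tr : PTree g A) →
    g.Derives [Symbol.nonterminal A] (tr.yield.map Symbol.terminal)
  | .node r hr f =>
    Relation.ReflTransGen.head ⟨r, hr, ContextFreeRule.Rewrites.input_output⟩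
      (by simpa [PTree.yield] using f.yieldF_derives)

theorem SForest.yieldF_derives {l : List (Symbol T g.NT)} : (f : SForest g l) →
    g.Derives l (f.yieldF.map Symbol.terminal)
  | .nil => by simp [SForest.yieldF]; rfl
  | .consT t f => by
      simpa [SForest.yieldF] using (f.yieldF_derives).append_left [Symbol.terminal t]
  | @SForest.consN _ _ B l tr f => by
      have h1 : g.Derives ([Symbol.nonterminal B] ++ l)
          (tr.yield.map Symbol.terminal ++ l) := (tr.yield_derives).append_right l
      have h2 : g.Derives (tr.yield.map Symbol.terminal ++ l)
          (tr.yield.map Symbol.terminal ++ f.yieldF.map Symbol.terminal) :=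
        (f.yieldF_derives).append_left _
      simpa [SForest.yieldF] using h1.trans h2
end

lemma map_terminal_ne_nt {w : List T} {B : g.NT} {q : List (Symbol T g.NT)} :
    w.map Symbol.terminal ≠ Symbol.nonterminal B :: q := by
  cases w <;> simp

theorem exists_forest (n : ℕ) :
    ∀ (l : List (Symbol T g.NT)), ∀ m ≤ n, ∀ (w : List T),
      DerIn g m l (w.map Symbol.terminal) →
      Nonempty {f : SForest g l // f.yieldF = w} := by
  induction n using Nat.strong_induction_on with
  | _ n IH =>
  intro l
  induction l with
  | nil =>
    intro m hm w h
    generalize hgen : w.map (Symbol.terminal (N := g.NT)) = z at h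
    cases h with
    | refl =>
      have : w = [] := by cases w <;> simp_all
      exact ⟨.nil, by simp [this, SForest.yieldF]⟩
    | head hp _ =>
      obtain ⟨r, _, hrw⟩ := hp
      exact absurd hrw rewrites_nil
  | cons s l' ihl =>
    intro m hm w h
    cases s with
    | terminal t =>
      obtain ⟨n₁, n₂, u', v', hn, hw, d1, d2⟩ :=
        h.append_split [Symbol.terminal t] l' rfl
      have hu' : u' = [Symbol.terminal t] := by
        have := (show DerIn g n₁ (([t] : List T).map Symbol.terminal) u' by simpa using d1)
        simpa using this.terminal_eq
      subst hu'
      cases w with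
      | nil => simp at hw
      | cons t₀ w' =>
        simp at hw
        obtain ⟨ht, hv'⟩ := hw
        subst ht
        obtain ⟨f', hf'⟩ := ihl n₂ (by omega) w' (hv' ▸ d2)
        exact ⟨.consT t₀ f', by simp [SForest.yieldF, hf']⟩
    | nonterminal B =>
      obtain ⟨n₁, n₂, u', v', hn, hw, d1, d2⟩ :=
        h.append_split [Symbol.nonterminal B] l' rfl
      rw [List.map_eq_append_iff] at hw
      obtain ⟨w₁, w₂, rfl, hw1, hw2⟩ := hw
      cases d1 with
      | refl => exact absurd (hw1.trans rfl) (by cases w₁ <;> simp)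
      | @head _ v _ n₁' hp d1' =>
        obtain ⟨r, hr, hrw⟩ := hp
        obtain ⟨hin, hv⟩ := rewrites_single_nt hrw
        subst hin hv
        obtain ⟨f₀, hf₀⟩ := IH n₁' (by omega) r.output n₁' le_rfl w₁ (hw1 ▸ d1')
        obtain ⟨f', hf'⟩ := ihl n₂ (by omega) w₂ (hw2 ▸ d2)
        exact ⟨.consN (.node r hr f₀) f',
          by simp [SForest.yieldF, PTree.yield, hf₀, hf']⟩

/-- The nonterminals that occur as inputs of rules. -/
noncomputable def inputs (g : ContextFreeGrammar.{0} T) : Finset g.NT :=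
  @Finset.image _ _ (Classical.decEq _) (·.input) g.rules

/-- One more than enough: a bound on rule output lengths, at least 1. -/
def M (g : ContextFreeGrammar.{0} T) : ℕ :=
  (g.rules.sup fun r => r.output.length) ⊔ 1

lemma one_le_M : 1 ≤ M g := le_max_right _ _

lemma output_le_M {r : ContextFreeRule T g.NT} (hr : r ∈ g.rules) : r.output.length ≤ M g := by
  unfold M
  exact le_sup_of_le_left (Finset.le_sup (f := fun r : ContextFreeRule T g.NT => r.output.length) hr)

lemma PTree.root_mem_inputs {A : g.NT} (tr : PTree g A) : A ∈ inputs g := by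
  cases tr with
  | node r hr f =>
    simp only [inputs, Finset.mem_image]
    exact ⟨r, hr, rfl⟩

theorem heavy (d : ℕ) : ∀ {l : List (Symbol T g.NT)} (f : SForest g l),
    f.yieldF.length > M g ^ d * l.length →
    ∃ (B : g.NT) (p q : List T) (tr' : PTree g B),
      f.yieldF = p ++ tr'.yield ++ q ∧ tr'.yield.length > M g ^ d ∧
      g.Derives l (p.map .terminal ++ [Symbol.nonterminal B] ++ q.map .terminal) ∧
      sizeOf tr' < sizeOf f
  | _, .nil => by intro h; simp [SForest.yieldF] at h
  | _, @SForest.consT _ _ t l' f => by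
    intro h
    have hE : 1 ≤ M g ^ d := Nat.one_le_pow _ _ one_le_M
    have hrec : f.yieldF.length > M g ^ d * l'.length := by
      simp only [SForest.yieldF, List.length_cons, Nat.mul_succ] at h ⊢
      generalize M g ^ d * l'.length = F at h ⊢
      omega
    obtain ⟨B, p, q, tr', h1, h2, h3, h4⟩ := heavy d f hrec
    refine ⟨B, t :: p, q, tr', by simp [SForest.yieldF, h1], h2, ?_, ?_⟩
    · simpa using h3.append_left [Symbol.terminal t]
    · have : sizeOf f < sizeOf (SForest.consT (g := g) t (l := l') f) := by
        simp <;> omega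
      omega
  | _, @SForest.consN _ _ B₀ l' tr f => by
    intro h
    have hE : 1 ≤ M g ^ d := Nat.one_le_pow _ _ one_le_M
    rcases lt_or_ge (M g ^ d) tr.yield.length with hbig | hsmall
    · refine ⟨B₀, [], f.yieldF, tr, by simp [SForest.yieldF], hbig, ?_, ?_⟩
      · simpa using (f.yieldF_derives).append_left [Symbol.nonterminal B₀]
      · simp <;> omega
    · have hrec : f.yieldF.length > M g ^ d * l'.length := by
        simp only [SForest.yieldF, List.length_append, List.length_cons, Nat.mul_succ] at h ⊢
        generalize M g ^ d * l'.length = F at h ⊢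
        omega
      obtain ⟨B, p, q, tr', h1, h2, h3, h4⟩ := heavy d f hrec
      refine ⟨B, tr.yield ++ p, q, tr', by simp [SForest.yieldF, h1], h2, ?_, ?_⟩
      · have s1 : g.Derives ([Symbol.nonterminal B₀] ++ l')
            (tr.yield.map Symbol.terminal ++ l') := (tr.yield_derives).append_right l'
        have s2 := h3.append_left (tr.yield.map (Symbol.terminal (N := g.NT)))
        have := s1.trans s2
        simpa using this
      · simp <;> omega

theorem frame (d : ℕ) : ∀ (N : ℕ) {A : g.NT} (tr : PTree g A), sizeOf tr ≤ N →
    tr.yield.length > M g ^ (d + 1) →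
    ∃ (B : g.NT) (p q : List T) (tr' : PTree g B),
      p ++ q ≠ [] ∧ tr.yield = p ++ tr'.yield ++ q ∧ tr'.yield.length > M g ^ d ∧
      g.Derives [Symbol.nonterminal A]
        (p.map .terminal ++ [Symbol.nonterminal B] ++ q.map .terminal) := by
  intro N
  induction N with
  | zero =>
    intro A tr h0
    exfalso
    cases tr with
    | node r hr f => simp at h0 <;> omega
  | succ N ih =>
    intro A tr hsz hlen
    cases tr with
    | node r hr f =>
      have hout : r.output.length ≤ M g := output_le_M hr
      have hy : f.yieldF.length > M g ^ d * r.output.length := by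
        have : M g ^ d * r.output.length ≤ M g ^ (d + 1) := by
          rw [pow_succ]
          exact Nat.mul_le_mul_left _ hout
        have := lt_of_le_of_lt this hlen
        simpa [PTree.yield] using this
      obtain ⟨B, p, q, tr', h1, h2, h3, h4⟩ := heavy d f hy
      have hstep : g.Derives [Symbol.nonterminal r.input] r.output :=
        Relation.ReflTransGen.single ⟨r, hr, ContextFreeRule.Rewrites.input_output⟩
      rcases eq_or_ne (p ++ q) [] with hpq | hpq
      · obtain ⟨hp, hq⟩ := List.append_eq_nil_iff.mp hpq
        subst hp hq
        have hyield : (PTree.node r hr f).yield = tr'.yield := by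
          simpa [PTree.yield] using h1
        have htr' : sizeOf tr' ≤ N := by
          have : sizeOf tr' < sizeOf (PTree.node r hr f) := by simp <;> omega
          omega
        obtain ⟨B', p', q', tr'', k1, k2, k3, k4⟩ := ih tr' htr' (by rw [← hyield]; exact hlen)
        refine ⟨B', p', q', tr'', k1, by rw [hyield]; exact k2, k3, ?_⟩
        have : g.Derives [Symbol.nonterminal r.input] [Symbol.nonterminal B] :=
          hstep.trans (by simpa using h3)
        exact this.trans k4
      · exact ⟨B, p, q, tr', hpq, by simpa [PTree.yield] using h1, h2, hstep.trans h3⟩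

/-- A spine: a chain of nontrivial frames. -/
def Spine (g : ContextFreeGrammar.{0} T) : g.NT → List (g.NT × List T × List T) → g.NT → Prop
  | A, [], B => B = A
  | A, (C, p, q) :: rest, B =>
      g.Derives [Symbol.nonterminal A]
        (p.map .terminal ++ [Symbol.nonterminal C] ++ q.map .terminal) ∧
      p ++ q ≠ [] ∧ C ∈ inputs g ∧ Spine g C rest B

def leftStr {β : Type*} (c : List (β × List T × List T)) : List T :=
  (c.map fun e => e.2.1).flatten

def rightStr {β : Type*} (c : List (β × List T × List T)) : List T :=
  (c.reverse.map fun e => e.2.2).flatten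

@[simp] lemma leftStr_nil {β : Type*} : leftStr (T := T) ([] : List (β × List T × List T)) = [] := rfl
@[simp] lemma rightStr_nil {β : Type*} : rightStr (T := T) ([] : List (β × List T × List T)) = [] := rfl

@[simp] lemma leftStr_cons {β : Type*} (e : β × List T × List T) (c : List (β × List T × List T)) :
    leftStr (e :: c) = e.2.1 ++ leftStr c := by simp [leftStr]

@[simp] lemma rightStr_cons {β : Type*} (e : β × List T × List T) (c : List (β × List T × List T)) :
    rightStr (e :: c) = rightStr c ++ e.2.2 := by simp [rightStr]

@[simp] lemma leftStr_append {β : Type*} (c₁ c₂ : List (β × List T × List T)) :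
    leftStr (c₁ ++ c₂) = leftStr c₁ ++ leftStr c₂ := by simp [leftStr]

@[simp] lemma rightStr_append {β : Type*} (c₁ c₂ : List (β × List T × List T)) :
    rightStr (c₁ ++ c₂) = rightStr c₂ ++ rightStr c₁ := by simp [rightStr]

lemma Spine.split (c₁ c₂ : List (g.NT × List T × List T)) :
    ∀ {A B : g.NT}, Spine g A (c₁ ++ c₂) B → ∃ C, Spine g A c₁ C ∧ Spine g C c₂ B := by
  induction c₁ with
  | nil => exact fun h => ⟨_, rfl, h⟩
  | cons e rest ih =>
    intro A B h
    obtain ⟨C, p, q⟩ := e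
    obtain ⟨h1, h2, h3, h4⟩ := h
    obtain ⟨D, hD1, hD2⟩ := ih h4
    exact ⟨D, ⟨h1, h2, h3, hD1⟩, hD2⟩

lemma Spine.frame_of {c : List (g.NT × List T × List T)} :
    ∀ {A B : g.NT}, Spine g A c B →
      g.Derives [Symbol.nonterminal A]
        ((leftStr c).map .terminal ++ [Symbol.nonterminal B] ++ (rightStr c).map .terminal) := by
  induction c with
  | nil =>
    intro A B h
    rw [show B = A from h]
    simp; rfl
  | cons e rest ih =>
    intro A B h
    obtain ⟨C, p, q⟩ := e
    obtain ⟨h1, h2, h3, h4⟩ := h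
    have hin := ((ih h4).append_left (p.map (Symbol.terminal (N := g.NT)))).append_right
      (q.map (Symbol.terminal (N := g.NT)))
    have := (h1.append_right []).trans (by simpa using hin)
    simpa using this

lemma Spine.labels_mem {c : List (g.NT × List T × List T)} :
    ∀ {A B : g.NT}, Spine g A c B → ∀ e ∈ c, e.1 ∈ inputs g := by
  induction c with
  | nil => intro A B h e he; simp at he
  | cons e rest ih =>
    intro A B h e' he'
    obtain ⟨C, p, q⟩ := e
    obtain ⟨h1, h2, h3, h4⟩ := h
    rcases List.mem_cons.mp he' with rfl | hmem
    · exact h3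
    · exact ih h4 e' hmem

theorem spine_exists (d : ℕ) : ∀ {A : g.NT} (tr : PTree g A), tr.yield.length > M g ^ d →
    ∃ (c : List (g.NT × List T × List T)) (B : g.NT) (t : List T),
      c.length = d ∧ Spine g A c B ∧ g.Derives [Symbol.nonterminal B] (t.map .terminal) ∧
      tr.yield = leftStr c ++ t ++ rightStr c := by
  induction d with
  | zero =>
    intro A tr _
    exact ⟨[], A, tr.yield, rfl, rfl, tr.yield_derives, by simp⟩
  | succ d ih =>
    intro A tr hlen
    obtain ⟨B, p, q, tr', hne, hyq, hlen', hder⟩ := frame d (sizeOf tr) tr le_rfl hlen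
    obtain ⟨c, B', t, hc, hs, hd, hy⟩ := ih tr' hlen'
    refine ⟨(B, p, q) :: c, B', t, by simp [hc], ⟨hder, hne, tr'.root_mem_inputs, hs⟩, hd, ?_⟩
    simp [hyq, hy]

lemma exists_dup {β γ : Type*} (f : β → γ) :
    ∀ (c : List β), ¬ (c.map f).Nodup →
      ∃ c₁ e c₂ e' c₃, c = c₁ ++ e :: c₂ ++ e' :: c₃ ∧ f e = f e' := by
  intro c
  induction c with
  | nil => intro h; simp at h
  | cons hd tl ih =>
    intro h
    by_cases htl : (tl.map f).Nodup
    · have : f hd ∈ tl.map f := by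
        by_contra hmem
        exact h (List.nodup_cons.mpr ⟨hmem, htl⟩)
      obtain ⟨e', he', hfe⟩ := List.mem_map.mp this
      obtain ⟨s, t, rfl⟩ := List.append_of_mem he'
      exact ⟨[], hd, s, e', t, by simp, hfe.symm⟩
    · obtain ⟨c₁, e, c₂, e', c₃, rfl, hfe⟩ := ih htl
      exact ⟨hd :: c₁, e, c₂, e', c₃, by simp, hfe⟩

lemma pump_iter {B : g.NT} {v y : List T}
    (hB : g.Derives [Symbol.nonterminal B]
      (v.map .terminal ++ [Symbol.nonterminal B] ++ y.map .terminal)) :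
    ∀ n : ℕ, g.Derives [Symbol.nonterminal B]
      (((List.replicate n v).flatten).map .terminal ++ [Symbol.nonterminal B] ++
        ((List.replicate n y).flatten).map .terminal) := by
  intro n
  induction n with
  | zero => simp; rfl
  | succ n ihn =>
    have step := ((ihn.append_left (v.map (Symbol.terminal (N := g.NT)))).append_right
      (y.map (Symbol.terminal (N := g.NT))))
    have := hB.trans (by simpa using step)
    have hrep : ∀ (a : List T), (List.replicate (n+1) a).flatten = a ++ (List.replicate n a).flatten := by
      intro a; rw [List.replicate_succ]; simp
    have hrep' : ∀ (a : List T), (List.replicate (n+1) a).flatten = (List.replicate n a).flatten ++ a := by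
      intro a; rw [List.replicate_succ']; simp
    rw [hrep v, hrep' y]
    simpa using this

theorem weak_pumping {T : Type} (L : Language T) (hL : L.IsContextFree) :
    ∃ N : ℕ, 1 ≤ N ∧ ∀ w ∈ L, N ≤ w.length →
      ∃ u v x y z : List T, w = u ++ v ++ x ++ y ++ z ∧ v ++ y ≠ [] ∧
        ∀ n : ℕ,
          u ++ (List.replicate n v).flatten ++ x ++ (List.replicate n y).flatten ++ z ∈ L := by
  classical
  obtain ⟨g, rfl⟩ := hL
  set K := (inputs g).card with hK
  refine ⟨M g ^ (K + 1) + 1, by omega, ?_⟩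
  intro w hw hlen
  -- get a parse tree
  obtain ⟨n, hn⟩ := derIn_of_derives hw
  obtain ⟨f, hf⟩ := exists_forest n [Symbol.nonterminal g.initial] n le_rfl w hn
  cases f with
  | consN tr f' =>
  cases f'
  have hyw : tr.yield = w := by simpa [SForest.yieldF] using hf
  have hbig : tr.yield.length > M g ^ (K + 1) := by rw [hyw]; omega
  obtain ⟨c, B, t, hc, hs, hd, hy⟩ := spine_exists (K + 1) tr hbig
  -- pigeonhole on the labels
  have hnodup : ¬ (c.map (·.1)).Nodup := by
    intro hnd
    have hsub : (c.map (·.1)).toFinset ⊆ inputs g := by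
      intro a ha
      rw [List.mem_toFinset] at ha
      obtain ⟨e, he, rfl⟩ := List.mem_map.mp ha
      exact hs.labels_mem e he
    have h1 := Finset.card_le_card hsub
    rw [List.toFinset_card_of_nodup hnd] at h1
    simp only [List.length_map, hc] at h1
    omega
  obtain ⟨c₁, e, c₂, e', c₃, rfl, hfe⟩ := exists_dup (·.1) c hnodup
  obtain ⟨D₂, hLL, hR⟩ := Spine.split (c₁ ++ (e :: c₂)) (e' :: c₃) hs
  obtain ⟨D, hsD, hL⟩ := Spine.split c₁ (e :: c₂) hLL
  obtain ⟨C, p, q⟩ := e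
  obtain ⟨hf1, hne1, -, hsc₂⟩ := hL
  obtain ⟨C', p', q'⟩ := e'
  obtain ⟨hf2, hne2, -, hs3⟩ := hR
  have hCC : C' = C := by simpa using hfe.symm
  subst hCC
  -- the five pieces
  refine ⟨leftStr c₁ ++ p, leftStr c₂ ++ p', leftStr c₃ ++ t ++ rightStr c₃,
    q' ++ rightStr c₂, q ++ rightStr c₁, ?_, ?_, ?_⟩
  · rw [← hyw, hy]; simp
  · intro hcon
    rw [List.append_eq_nil_iff] at hcon
    obtain ⟨h1, h2⟩ := hcon
    rw [List.append_eq_nil_iff] at h1 h2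
    exact hne2 (by rw [h1.2, h2.1]; rfl)
  · intro m
    -- D1 : initial ⇒* u [C] z
    have D1 : g.Derives [Symbol.nonterminal g.initial]
        ((leftStr c₁ ++ p).map .terminal ++ [Symbol.nonterminal C'] ++
          (q ++ rightStr c₁).map .terminal) := by
      have base := Spine.frame_of hsD
      have expand := ((hf1.append_left
        ((leftStr c₁).map (Symbol.terminal (N := g.NT)))).append_right
        ((rightStr c₁).map (Symbol.terminal (N := g.NT))))
      have := base.trans (by simpa using expand)
      simpa using this
    -- D2 : C ⇒* v [C] y
    have D2 : g.Derives [Symbol.nonterminal C']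
        ((leftStr c₂ ++ p').map .terminal ++ [Symbol.nonterminal C'] ++
          (q' ++ rightStr c₂).map .terminal) := by
      have base := Spine.frame_of hsc₂
      have expand := ((hf2.append_left
        ((leftStr c₂).map (Symbol.terminal (N := g.NT)))).append_right
        ((rightStr c₂).map (Symbol.terminal (N := g.NT))))
      have := base.trans (by simpa using expand)
      simpa using this
    -- D3 : C ⇒* x
    have D3 : g.Derives [Symbol.nonterminal C']
        ((leftStr c₃ ++ t ++ rightStr c₃).map .terminal) := by
      have base := Spine.frame_of hs3
      have expand := ((hd.append_left
        ((leftStr c₃).map (Symbol.terminal (N := g.NT)))).append_right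
        ((rightStr c₃).map (Symbol.terminal (N := g.NT))))
      have := base.trans (by simpa using expand)
      simpa using this
    have P1 := pump_iter D2 m
    have mid := P1.trans (by
      exact ((D3.append_left
        ((((List.replicate m (leftStr c₂ ++ p')).flatten)).map (Symbol.terminal (N := g.NT)))).append_right
        (((List.replicate m (q' ++ rightStr c₂)).flatten).map (Symbol.terminal (N := g.NT)))))
    have full := D1.trans (by
      exact ((mid.append_left
        (((leftStr c₁ ++ p)).map (Symbol.terminal (N := g.NT)))).append_right
        (((q ++ rightStr c₁)).map (Symbol.terminal (N := g.NT)))))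
    show g.Derives [Symbol.nonterminal g.initial] _
    simpa using full

end CFPump

/-- Two arcs cross: `i < i' < j < j'` or `i' < i < j' < j`. -/
def ArcsCross {k : ℕ} (e₁ e₂ : Fin k × Fin k) : Prop :=
  (e₁.1 < e₂.1 ∧ e₂.1 < e₁.2 ∧ e₁.2 < e₂.2) ∨
  (e₂.1 < e₁.1 ∧ e₁.1 < e₂.2 ∧ e₂.2 < e₁.2)

/-- An arc set on `{1, …, k}`: every arc `(i, j)` satisfies `i < j`. -/
def IsArcSet {k : ℕ} (C : Set (Fin k × Fin k)) : Prop :=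
  ∀ e ∈ C, e.1 < e.2

/-- An arc set is well-nested if no two of its arcs cross. -/
def WellNested {k : ℕ} (C : Set (Fin k × Fin k)) : Prop :=
  ∀ e₁ ∈ C, ∀ e₂ ∈ C, ¬ ArcsCross e₁ e₂

/-- An arc set is a matching if no two distinct arcs share an endpoint. -/
def IsMatching {k : ℕ} (C : Set (Fin k × Fin k)) : Prop :=
  ∀ e₁ ∈ C, ∀ e₂ ∈ C, e₁ ≠ e₂ →
    ({e₁.1, e₁.2} : Set (Fin k)) ∩ {e₂.1, e₂.2} = ∅

/-- Joint well-nestedness of two arc sets: each is well-nested, no arc of one crosses an arc of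
the other, and no two *distinct* arcs (one from each set) share an endpoint. -/
def JointlyWellNested {k : ℕ} (C₁ C₂ : Set (Fin k × Fin k)) : Prop :=
  WellNested C₁ ∧ WellNested C₂ ∧
  (∀ e₁ ∈ C₁, ∀ e₂ ∈ C₂, ¬ ArcsCross e₁ e₂) ∧
  (∀ e₁ ∈ C₁, ∀ e₂ ∈ C₂, e₁ ≠ e₂ →
    ({e₁.1, e₁.2} : Set (Fin k)) ∩ {e₂.1, e₂.2} = ∅)

/-- The block-counting language over the sub-alphabets `σ 0, …, σ (k-1)` with arc set `C`:
all words that decompose as `B₁B₂⋯B_k` with each block `B_i` over `σ i` and with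
`|B_i| = |B_j|` for every arc `(i, j) ∈ C`. -/
def blockLang {α : Type} {k : ℕ} (σ : Fin k → Set α) (C : Set (Fin k × Fin k)) : Language α :=
  { w | ∃ B : Fin k → List α,
      w = (List.ofFn B).flatten ∧
      (∀ i : Fin k, ∀ x ∈ B i, x ∈ σ i) ∧
      (∀ e ∈ C, (B e.1).length = (B e.2).length) }

namespace BlockApp

variable {α : Type} {k : ℕ}

/-- Number of letters of `w` that belong to `σ i`. -/
noncomputable def cnt (σ : Fin k → Set α) (i : Fin k) (w : List α) : ℕ :=
  w.countP fun x => @decide (x ∈ σ i) (Classical.propDecidable _)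

lemma cnt_append (σ : Fin k → Set α) (i : Fin k) (u v : List α) :
    cnt σ i (u ++ v) = cnt σ i u + cnt σ i v := List.countP_append

lemma cnt_pos {σ : Fin k → Set α} {i : Fin k} {w : List α} :
    0 < cnt σ i w ↔ ∃ a ∈ w, a ∈ σ i := by
  rw [cnt, List.countP_pos_iff]
  constructor
  · rintro ⟨a, ha, hd⟩; exact ⟨a, ha, by simpa using hd⟩
  · rintro ⟨a, ha, hd⟩; exact ⟨a, ha, by simpa using hd⟩

lemma cnt_le_length (σ : Fin k → Set α) (i : Fin k) (w : List α) :
    cnt σ i w ≤ w.length := List.countP_le_length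

lemma cnt_flatten_ofFn {σ : Fin k → Set α}
    (hdisj : ∀ i j : Fin k, i ≠ j → Disjoint (σ i) (σ j))
    {B : Fin k → List α} (hB : ∀ i : Fin k, ∀ x ∈ B i, x ∈ σ i) (i : Fin k) :
    cnt σ i (List.ofFn B).flatten = (B i).length := by
  rw [cnt, List.countP_flatten, List.map_ofFn, List.sum_ofFn]
  rw [Finset.sum_eq_single i]
  · exact List.countP_eq_length.mpr fun a ha => by simpa using hB i a ha
  · intro j _ hji
    refine List.countP_eq_zero.mpr fun a ha => ?_
    have : a ∈ σ j := hB j a ha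
    simpa using fun hmem => (hdisj j i hji).le_bot ⟨this, hmem⟩
  · intro h; simp at h

lemma mem_blockLang_cnt {σ : Fin k → Set α}
    (hdisj : ∀ i j : Fin k, i ≠ j → Disjoint (σ i) (σ j))
    {C : Set (Fin k × Fin k)} {w : List α} (hw : w ∈ blockLang σ C)
    {e : Fin k × Fin k} (he : e ∈ C) : cnt σ e.1 w = cnt σ e.2 w := by
  obtain ⟨B, rfl, hB, hlen⟩ := hw
  rw [cnt_flatten_ofFn hdisj hB, cnt_flatten_ofFn hdisj hB]
  exact hlen e he

lemma mem_flatten_take {L : List (List α)} {n : ℕ} {x : α}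
    (h : x ∈ (L.take n).flatten) :
    ∃ m, m < n ∧ ∃ hm : m < L.length, x ∈ L[m] := by
  rw [List.mem_flatten] at h
  obtain ⟨l, hl, hx⟩ := h
  obtain ⟨r, hr, hget⟩ := List.mem_iff_getElem.mp hl
  rw [List.length_take] at hr
  have hr1 : r < n := lt_of_lt_of_le hr (min_le_left _ _)
  have hr2 : r < L.length := lt_of_lt_of_le hr (min_le_right _ _)
  refine ⟨r, hr1, hr2, ?_⟩
  rw [List.getElem_take] at hget
  rw [hget]; exact hx

lemma mem_flatten_drop {L : List (List α)} {n : ℕ} {x : α}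
    (h : x ∈ (L.drop n).flatten) :
    ∃ m, n ≤ m ∧ ∃ hm : m < L.length, x ∈ L[m] := by
  rw [List.mem_flatten] at h
  obtain ⟨l, hl, hx⟩ := h
  obtain ⟨r, hr, hget⟩ := List.mem_iff_getElem.mp hl
  rw [List.length_drop] at hr
  have hr2 : n + r < L.length := by omega
  refine ⟨n + r, by omega, hr2, ?_⟩
  rw [List.getElem_drop] at hget
  rw [hget]; exact hx

/-- Order lemma: in a member of a block language, no letter of a later alphabet can occur
before a letter of an earlier alphabet. -/
lemma blockLang_ordered {σ : Fin k → Set α}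
    (hdisj : ∀ i j : Fin k, i ≠ j → Disjoint (σ i) (σ j))
    {C : Set (Fin k × Fin k)} {w : List α} (hw : w ∈ blockLang σ C)
    {i j : Fin k} (hij : i < j) {w₁ w₂ w₃ : List α} {b a : α}
    (hb : b ∈ σ j) (ha : a ∈ σ i)
    (hsplit : w = w₁ ++ b :: (w₂ ++ a :: w₃)) : False := by
  obtain ⟨B, rfl, hB, -⟩ := hw
  set L := List.ofFn B with hL
  set Pre := (L.take (i.1 + 1)).flatten with hPre
  set Post := (L.drop (i.1 + 1)).flatten with hPost
  have hsplit2 : Pre ++ Post = w₁ ++ b :: (w₂ ++ a :: w₃) := by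
    rw [hPre, hPost, ← List.flatten_append, List.take_append_drop]
    exact hsplit
  have hbPre : b ∈ Pre → False := by
    intro hmem
    obtain ⟨m, hmn, hm, hxm⟩ := mem_flatten_take hmem
    have hmk : m < k := by simpa [hL] using hm
    have hgetm : L[m] = B ⟨m, hmk⟩ := by simp [hL]
    rw [hgetm] at hxm
    have hbm : b ∈ σ ⟨m, hmk⟩ := hB _ _ hxm
    have hne : (⟨m, hmk⟩ : Fin k) ≠ j := by
      intro hh
      have : m = j.1 := congrArg Fin.val hh
      have : m ≤ i.1 := by omega
      have := Fin.lt_iff_val_lt_val.mp hij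
      omega
    exact (hdisj _ j hne).le_bot ⟨hbm, hb⟩
  have haPost : a ∈ Post → False := by
    intro hmem
    obtain ⟨m, hmn, hm, hxm⟩ := mem_flatten_drop hmem
    have hmk : m < k := by simpa [hL] using hm
    have hgetm : L[m] = B ⟨m, hmk⟩ := by simp [hL]
    rw [hgetm] at hxm
    have ham : a ∈ σ ⟨m, hmk⟩ := hB _ _ hxm
    have hne : (⟨m, hmk⟩ : Fin k) ≠ i := by
      intro hh
      have : m = i.1 := congrArg Fin.val hh
      omega
    exact (hdisj _ i hne).le_bot ⟨ham, ha⟩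
  rcases List.append_eq_append_iff.mp hsplit2 with ⟨c, hc1, hc2⟩ | ⟨c, hc1, hc2⟩
  · -- w₁ = Pre ++ c, Post = c ++ b :: (w₂ ++ a :: w₃)
    exact haPost (by rw [hc2]; simp)
  · -- Pre = w₁ ++ c, b :: (w₂ ++ a :: w₃) = c ++ Post
    cases c with
    | nil =>
      simp at hc2
      exact haPost (by rw [← hc2]; simp)
    | cons s c' =>
      have hs : s = b := by
        have := congrArg (fun l => l.head?) hc2
        simpa using this.symm
      exact hbPre (by rw [hc1, ← hs]; simp)

/-- If two distinct alphabets both occur in a doubled factor, the word can't be in a block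
language. -/
lemma no_double_hit {σ : Fin k → Set α}
    (hdisj : ∀ i j : Fin k, i ≠ j → Disjoint (σ i) (σ j))
    {C : Set (Fin k × Fin k)} {W pre post vv : List α}
    (hmem : W ∈ blockLang σ C) (hW : W = pre ++ vv ++ vv ++ post)
    {s t : Fin k} (hst : s < t) (hs : 0 < cnt σ s vv) (ht : 0 < cnt σ t vv) : False := by
  obtain ⟨bt, hbt, hbtσ⟩ := cnt_pos.mp ht
  obtain ⟨as_, has_, hasσ⟩ := cnt_pos.mp hs
  obtain ⟨v₁, v₂, h12⟩ := List.append_of_mem hbt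
  obtain ⟨v₃, v₄, h34⟩ := List.append_of_mem has_
  refine blockLang_ordered hdisj hmem hst hbtσ hasσ
    (w₁ := pre ++ v₁) (w₂ := v₂ ++ v₃) (w₃ := v₄ ++ post) ?_
  rw [hW]
  nth_rewrite 2 [h34]
  nth_rewrite 1 [h12]
  simp [List.append_assoc]

end BlockApp

open BlockApp in
/-- If some arc of `C₁` and some distinct arc of `C₂` share an endpoint, then the intersection
of the corresponding block-counting languages is not context-free. -/
theorem blockLang_inter_not_contextFree_of_sharedEndpoint {α : Type} {k : ℕ}
    (σ : Fin k → Set α)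
    (hdisj : ∀ i j : Fin k, i ≠ j → Disjoint (σ i) (σ j))
    (hfin : ∀ i : Fin k, (σ i).Finite) (hne : ∀ i : Fin k, (σ i).Nonempty)
    (C₁ C₂ : Set (Fin k × Fin k))
    (hC₁ : IsArcSet C₁) (hC₂ : IsArcSet C₂)
    (hwn₁ : WellNested C₁) (hwn₂ : WellNested C₂)
    (hm₁ : IsMatching C₁) (hm₂ : IsMatching C₂)
    (hshare : ∃ e₁ ∈ C₁, ∃ e₂ ∈ C₂, e₁ ≠ e₂ ∧
      (({e₁.1, e₁.2} : Set (Fin k)) ∩ {e₂.1, e₂.2}).Nonempty) :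
    ¬ (blockLang σ C₁ ⊓ blockLang σ C₂).IsContextFree := by
  classical
  intro hcf
  obtain ⟨e₁, he₁, e₂, he₂, hne12, s₀, hs₀⟩ := hshare
  have h1 : e₁.1 < e₁.2 := hC₁ e₁ he₁
  have h2 : e₂.1 < e₂.2 := hC₂ e₂ he₂
  -- the component of the union graph containing the endpoints
  set Rel : Fin k → Fin k → Prop := fun i j =>
    ∃ e : Fin k × Fin k, (e ∈ C₁ ∨ e ∈ C₂) ∧ ((e.1 = i ∧ e.2 = j) ∨ (e.1 = j ∧ e.2 = i))
    with hRel
  set P : Set (Fin k) := {j | Relation.ReflTransGen Rel e₁.1 j} with hPdef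
  have hRelSymm : ∀ i j, Rel i j → Rel j i := by
    rintro i j ⟨e, he, h⟩
    exact ⟨e, he, by tauto⟩
  have hPclosed : ∀ i j, i ∈ P → Rel i j → j ∈ P := fun i j hi hr =>
    Relation.ReflTransGen.tail hi hr
  have hi1 : e₁.1 ∈ P := Relation.ReflTransGen.refl
  have hi2 : e₁.2 ∈ P := hPclosed _ _ hi1 ⟨e₁, Or.inl he₁, Or.inl ⟨rfl, rfl⟩⟩
  have hs₀1 : s₀ = e₁.1 ∨ s₀ = e₁.2 := by simpa using hs₀.1
  have hs₀2 : s₀ = e₂.1 ∨ s₀ = e₂.2 := by simpa using hs₀.2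
  have hs₀P : s₀ ∈ P := by rcases hs₀1 with rfl | rfl; exacts [hi1, hi2]
  have hj1 : e₂.1 ∈ P := by
    rcases hs₀2 with h | h
    · rwa [← h]
    · exact hPclosed _ _ (h ▸ hs₀P) (hRelSymm _ _ ⟨e₂, Or.inr he₂, Or.inl ⟨rfl, rfl⟩⟩)
  have hj2 : e₂.2 ∈ P := hPclosed _ _ hj1 ⟨e₂, Or.inr he₂, Or.inl ⟨rfl, rfl⟩⟩
  -- three distinct indices in P
  have hnotboth : ¬((e₂.1 = e₁.1 ∨ e₂.1 = e₁.2) ∧ (e₂.2 = e₁.1 ∨ e₂.2 = e₁.2)) := by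
    rintro ⟨ha | ha, hb | hb⟩
    · exact absurd (ha ▸ hb ▸ h2) (lt_irrefl _)
    · exact hne12 (Prod.ext ha.symm hb.symm)
    · exact absurd ((ha ▸ h1).trans (hb ▸ h2)) (lt_irrefl _)
    · exact absurd (ha ▸ hb ▸ h2) (lt_irrefl _)
  obtain ⟨i3, hi3P, hne31, hne32⟩ :
      ∃ i3, i3 ∈ P ∧ i3 ≠ e₁.1 ∧ i3 ≠ e₁.2 := by
    by_cases hc : e₂.1 = e₁.1 ∨ e₂.1 = e₁.2
    · refine ⟨e₂.2, hj2, ?_, ?_⟩ <;> intro hh <;> exact hnotboth ⟨hc, by tauto⟩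
    · exact ⟨e₂.1, hj1, fun hh => hc (Or.inl hh), fun hh => hc (Or.inr hh)⟩
  -- the witness word
  choose a ha using hne
  obtain ⟨N₀, hN₀pos, hpump⟩ := CFPump.weak_pumping _ hcf
  set Bw : Fin k → List α := fun i => if i ∈ P then List.replicate N₀ (a i) else [] with hBwdef
  set w : List α := (List.ofFn Bw).flatten with hwdef
  have hBw_mem : ∀ i : Fin k, ∀ x ∈ Bw i, x ∈ σ i := by
    intro i x hx
    by_cases hiP : i ∈ P <;> simp [hBwdef, hiP] at hx
    rw [hx.2]; exact ha i
  have hBw_len : ∀ i ∈ P, (Bw i).length = N₀ := by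
    intro i hiP; simp [hBwdef, hiP]
  have hcons : ∀ e : Fin k × Fin k, (e ∈ C₁ ∨ e ∈ C₂) →
      (Bw e.1).length = (Bw e.2).length := by
    intro e he
    have hiff : e.1 ∈ P ↔ e.2 ∈ P :=
      ⟨fun h => hPclosed _ _ h ⟨e, he, Or.inl ⟨rfl, rfl⟩⟩,
       fun h => hPclosed _ _ h ⟨e, he, Or.inr ⟨rfl, rfl⟩⟩⟩
    by_cases h : e.1 ∈ P
    · simp [hBwdef, h, hiff.mp h]
    · have h2' : e.2 ∉ P := fun hh => h (hiff.mpr hh)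
      simp [hBwdef, h, h2']
  have hwL : w ∈ blockLang σ C₁ ⊓ blockLang σ C₂ :=
    ⟨⟨Bw, rfl, hBw_mem, fun e he => hcons e (Or.inl he)⟩,
     ⟨Bw, rfl, hBw_mem, fun e he => hcons e (Or.inr he)⟩⟩
  have hcntw : ∀ i ∈ P, cnt σ i w = N₀ := by
    intro i hiP
    rw [hwdef, cnt_flatten_ofFn hdisj hBw_mem i, hBw_len i hiP]
  have hwlen : N₀ ≤ w.length :=
    le_trans (le_of_eq (hcntw _ hi1).symm) (cnt_le_length σ _ w)
  obtain ⟨u, v, xx, y, z, hw5, hvy, hall⟩ := hpump w hwL hwlen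
  have hw2 : u ++ (v ++ v) ++ xx ++ (y ++ y) ++ z ∈ blockLang σ C₁ ⊓ blockLang σ C₂ := by
    have := hall 2
    simpa [List.replicate, List.append_assoc] using this
  set w2 : List α := u ++ (v ++ v) ++ xx ++ (y ++ y) ++ z with hw2def
  -- counts in w2 agree across P
  have hchain : ∀ {jj : Fin k}, Relation.ReflTransGen Rel e₁.1 jj →
      cnt σ jj w2 = cnt σ e₁.1 w2 := by
    intro jj h
    induction h with
    | refl => rfl
    | tail hsteps hstep ih =>
      obtain ⟨e, heC, hor⟩ := hstep
      have harc : cnt σ e.1 w2 = cnt σ e.2 w2 := by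
        rcases heC with hh | hh
        · exact mem_blockLang_cnt hdisj hw2.1 hh
        · exact mem_blockLang_cnt hdisj hw2.2 hh
      rcases hor with ⟨hx1, hx2⟩ | ⟨hx1, hx2⟩
      · rw [← hx2, ← harc, hx1, ih]
      · rw [← hx1, harc, hx2, ih]
  have hcnt2 : ∀ j ∈ P, cnt σ j w2 = cnt σ e₁.1 w2 := fun j hj => hchain hj
  -- d is constant and positive on P
  have hsplitcnt : ∀ j : Fin k,
      cnt σ j w = cnt σ j u + cnt σ j v + cnt σ j xx + cnt σ j y + cnt σ j z := by
    intro j; rw [hw5]; simp [cnt_append]; ring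
  have hsplitcnt2 : ∀ j : Fin k,
      cnt σ j w2 = cnt σ j u + 2 * cnt σ j v + cnt σ j xx + 2 * cnt σ j y + cnt σ j z := by
    intro j; rw [hw2def]; simp [cnt_append]; ring
  have hdconst : ∀ j ∈ P, ∀ j' ∈ P,
      cnt σ j v + cnt σ j y = cnt σ j' v + cnt σ j' y := by
    intro j hj j' hj'
    have q1 := hcnt2 j hj
    have q2 := hcnt2 j' hj'
    have q3 := hcntw j hj
    have q4 := hcntw j' hj'
    have r1 := hsplitcnt j
    have r2 := hsplitcnt j'
    have r3 := hsplitcnt2 j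
    have r4 := hsplitcnt2 j'
    omega
  -- positivity
  have hletters : ∀ x ∈ w, ∃ i, i ∈ P ∧ x ∈ σ i := by
    intro x hx
    rw [hwdef, List.mem_flatten] at hx
    obtain ⟨l, hl, hxl⟩ := hx
    rw [List.mem_ofFn] at hl
    obtain ⟨i, rfl⟩ := hl
    refine ⟨i, ?_, hBw_mem i x hxl⟩
    by_contra hiP
    simp [hBwdef, hiP] at hxl
  have hxi : ∃ ξ, ξ ∈ v ∨ ξ ∈ y := by
    match v, y, hvy with
    | [], [], hvy => exact absurd rfl hvy
    | [], c :: t, _ => exact ⟨c, Or.inr (by simp)⟩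
    | c :: t, _, _ => exact ⟨c, Or.inl (by simp)⟩
  obtain ⟨ξ, hξ⟩ := hxi
  have hξw : ξ ∈ w := by
    rw [hw5]
    rcases hξ with h | h <;> simp [h]
  obtain ⟨i₀, hi₀P, hξσ⟩ := hletters ξ hξw
  have hd₀ : 0 < cnt σ i₀ v + cnt σ i₀ y := by
    rcases hξ with h | h
    · have : 0 < cnt σ i₀ v := cnt_pos.mpr ⟨ξ, h, hξσ⟩
      omega
    · have : 0 < cnt σ i₀ y := cnt_pos.mpr ⟨ξ, h, hξσ⟩
      omega
  have hdpos : ∀ j ∈ P, 0 < cnt σ j v + cnt σ j y := by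
    intro j hj
    rw [hdconst j hj i₀ hi₀P]
    exact hd₀
  -- pigeonhole among the three distinct indices
  have hhit : ∀ j ∈ P, 0 < cnt σ j v ∨ 0 < cnt σ j y := by
    intro j hj
    have := hdpos j hj
    omega
  have hne12' : e₁.1 ≠ e₁.2 := ne_of_lt h1
  have hpigeon : (∃ s t : Fin k, s ≠ t ∧ 0 < cnt σ s v ∧ 0 < cnt σ t v) ∨
      (∃ s t : Fin k, s ≠ t ∧ 0 < cnt σ s y ∧ 0 < cnt σ t y) := by
    rcases hhit _ hi1 with ha1 | ha1 <;> rcases hhit _ hi2 with ha2 | ha2 <;>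
      rcases hhit _ hi3P with ha3 | ha3
    · exact Or.inl ⟨_, _, hne12', ha1, ha2⟩
    · exact Or.inl ⟨_, _, hne12', ha1, ha2⟩
    · exact Or.inl ⟨_, _, fun hh => hne31 hh.symm, ha1, ha3⟩
    · exact Or.inr ⟨_, _, fun hh => hne32 hh.symm, ha2, ha3⟩
    · exact Or.inl ⟨_, _, fun hh => hne32 hh.symm, ha2, ha3⟩
    · exact Or.inr ⟨_, _, fun hh => hne31 hh.symm, ha1, ha3⟩
    · exact Or.inr ⟨_, _, hne12', ha1, ha2⟩
    · exact Or.inr ⟨_, _, hne12', ha1, ha2⟩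
  rcases hpigeon with ⟨s, t, hst, hsv, htv⟩ | ⟨s, t, hst, hsy, hty⟩
  · have hWv : w2 = u ++ v ++ v ++ (xx ++ (y ++ y) ++ z) := by
      rw [hw2def]; simp [List.append_assoc]
    rcases lt_or_gt_of_ne hst with hlt | hgt
    · exact no_double_hit hdisj hw2.1 hWv hlt hsv htv
    · exact no_double_hit hdisj hw2.1 hWv hgt htv hsv
  · have hWy : w2 = (u ++ (v ++ v) ++ xx) ++ y ++ y ++ z := by
      rw [hw2def]; simp [List.append_assoc]
    rcases lt_or_gt_of_ne hst with hlt | hgt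
    · exact no_double_hit hdisj hw2.1 hWy hlt hsy hty
    · exact no_double_hit hdisj hw2.1 hWy hgt hty hsy
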